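/- Let a_1, …, a_n be positive integers with Σ_{i=1}^n 1/a_i > 1. Then Σ_{i=1}^n 1/a_i ≥ 1 + 1/(a_1·a_2···a_n). -/

import Mathlib

/-- If `a 1, …, a n` are positive integers with `∑ 1/(a i) > 1`, then
`∑ 1/(a i) ≥ 1 + 1/(a 1 ⋯ a n)`. -/
theorem sum_reciprocals_gt_one_ge (n : ℕ) (a : Fin n → ℕ) (hpos : ∀ i, 0 < a i)
    (h : 1 < ∑ i, (1 : ℚ) / (a i : ℚ)) :
    1 + 1 / (∏ i, (a i : ℚ)) ≤ ∑ i, (1 : ℚ) / (a i : ℚ) := by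
  set P : ℕ := ∏ i, a i with hPdef
  have hPn : 0 < P := Finset.prod_pos fun i _ => hpos i
  have hPcast : (P : ℚ) = ∏ i, (a i : ℚ) := by push_cast [hPdef]; rfl
  have hPpos : (0 : ℚ) < (P : ℚ) := by exact_mod_cast hPn
  set N : ℕ := ∑ i, ∏ j ∈ Finset.univ.erase i, a j with hNdef
  have key : ∑ i, (1 : ℚ) / (a i : ℚ) = (N : ℚ) / (P : ℚ) := by
    rw [hNdef, Nat.cast_sum, Finset.sum_div]
    refine Finset.sum_congr rfl fun i _ => ?_
    have hai : (a i : ℚ) ≠ 0 := by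
      exact_mod_cast (hpos i).ne'
    rw [Nat.cast_prod, hPcast, ← Finset.prod_erase_mul _ _ (Finset.mem_univ i)]
    field_simp
    rw [div_self (Finset.prod_ne_zero_iff.mpr fun j _ => by
      exact_mod_cast (hpos j).ne')]
  rw [key] at h ⊢
  rw [lt_div_iff₀ hPpos, one_mul] at h
  have hNP : P + 1 ≤ N := by exact_mod_cast h
  rw [← hPcast, le_div_iff₀ hPpos, add_mul, one_mul, one_div,
    inv_mul_cancel₀ hPpos.ne']
  exact_mod_cast hNP
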